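/- For all integers 1 ≤ n_1 ≤ n_2, the following identity holds in the polynomial ring ℤ[q]: 4·∑_{i=1}^{n_1} i·q^{2n_1+n_2−i} + n_1·∑_{i=2n_1+1}^{n_1+n_2} (q^i + q^{i−1}) + ∑_{i=1}^{n_1−1} (n_1−i)·(q^{n_1+n_2+i} + q^{n_1+n_2+i−1}) + ∑_{i=0}^{n_2} (n_2+1−i)·q^{2n_1+i} + n_1·q^{2n_1} + ∑_{i=0}^{n_1−1} (i+1)·q^{n_1+i} + ∑_{i=0}^{n_1−1} ∑_{j=0}^{i} q^{i+j} − ∑_{i=0}^{n_1−1} ∑_{j=0}^{i} q^{2n_1+j} − 2·∑_{i=1}^{n_1} i·q^{2n_1+n_2−i} − ∑_{i=n_1}^{n_2−1} ∑_{j=0}^{i} q^{2n_1+j} = ∑_{i=1}^{n_1} i·(q^{2i−1}+q^{2i−2}) + (2n_1+1)·∑_{i=2n_1}^{n_1+n_2−1} q^{i} + 4·∑_{i=n_1+n_2}^{2n_1+n_2−1} (2n_1+n_2−i)·q^{i} + q^{2n_1+n_2}. -/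

import Mathlib

open Polynomial Finset

private lemma geo_aux {R : Type*} [CommRing R] (y : R) (n : ℕ) :
    (y - 1) * ∑ i ∈ range n, y ^ i = y ^ n - 1 := by
  rw [mul_comm, geom_sum_mul]

private lemma asc_aux {R : Type*} [CommRing R] (y : R) (n : ℕ) :
    (y - 1) ^ 2 * ∑ i ∈ range n, ((i + 1 : ℕ) : R) * y ^ i
      = (n : R) * y ^ (n + 1) - ((n + 1 : ℕ) : R) * y ^ n + 1 := by
  induction n with
  | zero => simp
  | succ n ih =>
    rw [sum_range_succ, mul_add, ih]
    push_cast
    ring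

private lemma desc_aux {R : Type*} [CommRing R] (y : R) (n : ℕ) :
    (y - 1) ^ 2 * ∑ i ∈ range n, ((n - i : ℕ) : R) * y ^ i
      = y ^ (n + 1) - ((n + 1 : ℕ) : R) * y + (n : R) := by
  induction n with
  | zero => simp
  | succ n ih =>
    have h : ∑ i ∈ range (n + 1), ((n + 1 - i : ℕ) : R) * y ^ i
        = (∑ i ∈ range n, ((n - i : ℕ) : R) * y ^ i) + ∑ i ∈ range (n + 1), y ^ i := by
      have h2 : ∀ i ∈ range (n + 1), ((n + 1 - i : ℕ) : R) * y ^ i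
          = ((n - i : ℕ) : R) * y ^ i + y ^ i := by
        intro i hi
        simp only [mem_range] at hi
        rw [show n + 1 - i = (n - i) + 1 by omega]
        push_cast
        ring
      rw [sum_congr rfl h2, sum_add_distrib, sum_range_succ _ n, Nat.sub_self]
      push_cast
      ring
    rw [h, mul_add, ih, show (y - 1) ^ 2 * ∑ i ∈ range (n + 1), y ^ i
        = (y - 1) * ((y - 1) * ∑ i ∈ range (n + 1), y ^ i) by ring, geo_aux]
    push_cast
    ring

private lemma sum_Icc_range {M : Type*} [AddCommMonoid M] {c d n : ℕ} (f g : ℕ → M)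
    (h : c + n = d + 1) (hfg : ∀ i < n, f (c + i) = g i) :
    ∑ i ∈ Icc c d, f i = ∑ i ∈ range n, g i := by
  refine Finset.sum_nbij' (fun i => i - c) (fun i => c + i) ?_ ?_ ?_ ?_ ?_
  · intro i hi; simp only [mem_Icc] at hi; simp only [mem_range]; omega
  · intro i hi; simp only [mem_range] at hi; simp only [mem_Icc]; omega
  · intro i hi; simp only [mem_Icc] at hi; show c + (i - c) = i; omega
  · intro i hi; simp only [mem_range] at hi; show c + i - c = i; omega
  · intro i hi; simp only [mem_Icc] at hi
    rw [← hfg (i - c) (by omega)]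
    congr 1
    omega

private lemma sum_Icc_range_rev {M : Type*} [AddCommMonoid M] {c d n : ℕ} (f g : ℕ → M)
    (h : c + n = d + 1) (hfg : ∀ i < n, f (c + (n - 1 - i)) = g i) :
    ∑ i ∈ Icc c d, f i = ∑ i ∈ range n, g i := by
  rw [sum_Icc_range f (fun i => f (c + i)) h (fun i _ => rfl),
    ← Finset.sum_range_reflect]
  exact Finset.sum_congr rfl fun i hi => hfg i (mem_range.mp hi)

private lemma geo_off (o n : ℕ) :
    ((X : Polynomial ℤ) - 1) * ∑ i ∈ range n, X ^ (o + i) = X ^ o * (X ^ n - 1) := by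
  have h : ∑ i ∈ range n, (X : Polynomial ℤ) ^ (o + i) = X ^ o * ∑ i ∈ range n, X ^ i := by
    rw [mul_sum]; exact sum_congr rfl fun i _ => pow_add X o i
  rw [h]
  linear_combination (X : Polynomial ℤ) ^ o * geo_aux (X : Polynomial ℤ) n

private lemma mulG (o n : ℕ) :
    ((X : Polynomial ℤ) - 1) ^ 2 * (X + 1) ^ 2 * ∑ i ∈ range n, X ^ (o + i)
      = (X + 1) ^ 2 * ((X - 1) * (X ^ o * (X ^ n - 1))) := by
  linear_combination (((X : Polynomial ℤ) + 1) ^ 2 * (X - 1)) * geo_off o n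

private lemma mulD (o n : ℕ) :
    ((X : Polynomial ℤ) - 1) ^ 2 * (X + 1) ^ 2
        * ∑ i ∈ range n, ((n - i : ℕ) : Polynomial ℤ) * X ^ (o + i)
      = (X + 1) ^ 2 * (X ^ o * (X ^ (n + 1) - ((n + 1 : ℕ) : Polynomial ℤ) * X + (n : Polynomial ℤ))) := by
  have h : ∑ i ∈ range n, ((n - i : ℕ) : Polynomial ℤ) * X ^ (o + i)
      = X ^ o * ∑ i ∈ range n, ((n - i : ℕ) : Polynomial ℤ) * X ^ i := by
    rw [mul_sum]
    refine sum_congr rfl fun i _ => ?_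
    rw [pow_add]; ring
  rw [h]
  linear_combination (((X : Polynomial ℤ) + 1) ^ 2 * X ^ o) * desc_aux (X : Polynomial ℤ) n

private lemma mulA (o n : ℕ) :
    ((X : Polynomial ℤ) - 1) ^ 2 * (X + 1) ^ 2
        * ∑ i ∈ range n, ((i + 1 : ℕ) : Polynomial ℤ) * X ^ (o + i)
      = (X + 1) ^ 2 * (X ^ o * ((n : Polynomial ℤ) * X ^ (n + 1)
          - ((n + 1 : ℕ) : Polynomial ℤ) * X ^ n + 1)) := by
  have h : ∑ i ∈ range n, ((i + 1 : ℕ) : Polynomial ℤ) * X ^ (o + i)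
      = X ^ o * ∑ i ∈ range n, ((i + 1 : ℕ) : Polynomial ℤ) * X ^ i := by
    rw [mul_sum]
    refine sum_congr rfl fun i _ => ?_
    rw [pow_add]; ring
  rw [h]
  linear_combination (((X : Polynomial ℤ) + 1) ^ 2 * X ^ o) * asc_aux (X : Polynomial ℤ) n

private lemma odd_geo (n : ℕ) :
    ((X : Polynomial ℤ) ^ 2 - 1) * ∑ i ∈ range n, (X : Polynomial ℤ) ^ (2 * i + 1)
      = X * (X ^ (2 * n) - 1) := by
  have h : ∑ i ∈ range n, (X : Polynomial ℤ) ^ (2 * i + 1)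
      = X * ∑ i ∈ range n, ((X : Polynomial ℤ) ^ 2) ^ i := by
    rw [mul_sum]
    refine sum_congr rfl fun i _ => ?_
    rw [← pow_mul]; ring
  rw [h]
  linear_combination (X : Polynomial ℤ) * geo_aux ((X : Polynomial ℤ) ^ 2) n

private lemma mulE (n : ℕ) :
    ((X : Polynomial ℤ) - 1) ^ 2 * (X + 1) ^ 2
        * ∑ i ∈ range n, ((i + 1 : ℕ) : Polynomial ℤ) * (X ^ (2 * i + 1) + X ^ (2 * i))
      = (X + 1) * ((n : Polynomial ℤ) * X ^ (2 * n + 2)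
          - ((n + 1 : ℕ) : Polynomial ℤ) * X ^ (2 * n) + 1) := by
  have h : ∑ i ∈ range n, ((i + 1 : ℕ) : Polynomial ℤ) * (X ^ (2 * i + 1) + X ^ (2 * i))
      = (X + 1) * ∑ i ∈ range n, ((i + 1 : ℕ) : Polynomial ℤ) * ((X : Polynomial ℤ) ^ 2) ^ i := by
    rw [mul_sum]
    refine sum_congr rfl fun i _ => ?_
    rw [← pow_mul]; ring
  rw [h]
  linear_combination ((X : Polynomial ℤ) + 1) * asc_aux ((X : Polynomial ℤ) ^ 2) n

private lemma mulF (n : ℕ) :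
    ((X : Polynomial ℤ) - 1) ^ 2 * (X + 1) ^ 2
        * ∑ i ∈ range n, ∑ j ∈ range (i + 1), (X : Polynomial ℤ) ^ (i + j)
      = (X + 1) * X * (X ^ (2 * n) - 1) - (X + 1) ^ 2 * (X ^ n - 1) := by
  have step : ((X : Polynomial ℤ) - 1) * ∑ i ∈ range n, ∑ j ∈ range (i + 1), (X : Polynomial ℤ) ^ (i + j)
      = (∑ i ∈ range n, (X : Polynomial ℤ) ^ (2 * i + 1)) - ∑ i ∈ range n, (X : Polynomial ℤ) ^ i := by
    rw [mul_sum, ← sum_sub_distrib]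
    refine sum_congr rfl fun i _ => ?_
    rw [geo_off i (i + 1)]
    rw [mul_sub, mul_one, ← pow_add, show i + (i + 1) = 2 * i + 1 by omega]
  linear_combination (((X : Polynomial ℤ) + 1) ^ 2 * (X - 1)) * step
    + ((X : Polynomial ℤ) + 1) * odd_geo n - ((X : Polynomial ℤ) + 1) ^ 2 * geo_aux (X : Polynomial ℤ) n

private lemma mulH (o m n : ℕ) :
    ((X : Polynomial ℤ) - 1) ^ 2 * (X + 1) ^ 2
        * ∑ i ∈ range n, ∑ j ∈ range (m + i), (X : Polynomial ℤ) ^ (o + j)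
      = (X + 1) ^ 2 * (X ^ (o + m + n) - X ^ (o + m) - (n : Polynomial ℤ) * (X - 1) * X ^ o) := by
  have step : ((X : Polynomial ℤ) - 1) * ∑ i ∈ range n, ∑ j ∈ range (m + i), (X : Polynomial ℤ) ^ (o + j)
      = (∑ i ∈ range n, (X : Polynomial ℤ) ^ (o + m + i)) - (n : Polynomial ℤ) * X ^ o := by
    rw [mul_sum]
    have h2 : ∀ i ∈ range n, ((X : Polynomial ℤ) - 1) * ∑ j ∈ range (m + i), (X : Polynomial ℤ) ^ (o + j)
        = X ^ (o + m + i) - X ^ o := by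
      intro i _
      rw [geo_off o (m + i), mul_sub, mul_one, ← pow_add, show o + (m + i) = o + m + i by omega]
    rw [sum_congr rfl h2, sum_sub_distrib, sum_const, card_range, nsmul_eq_mul]
  linear_combination (((X : Polynomial ℤ) + 1) ^ 2 * (X - 1)) * step
    + ((X : Polynomial ℤ) + 1) ^ 2 * geo_off (o + m) n


/-- **Poincaré polynomial identity for `GL₃`** (in the variable `q = t²`):  the sum of the
contributions of the affine cells of `𝒳_γ ∩ Sch(2n₁+n₂,0,0)` (regions `R₁, R'₁, R₂, R'₂, R₃,
R₄, R'₄`) minus the contributions of the cells paving the complement of the fundamental domain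
`F_γ` (regions `T₁, T₂, T₃, T'₁`) equals the Poincaré polynomial `P_{(n₁,n₂)}` written in
`q = t²`. -/
theorem gl3_poincare_polynomial_identity (n₁ n₂ : ℕ) (h₁ : 1 ≤ n₁) (h₁₂ : n₁ ≤ n₂) :
    (4 * ∑ i ∈ Icc 1 n₁, (i : Polynomial ℤ) * X ^ (2 * n₁ + n₂ - i)
      + (n₁ : Polynomial ℤ) * ∑ i ∈ Icc (2 * n₁ + 1) (n₁ + n₂), (X ^ i + X ^ (i - 1))
      + ∑ i ∈ Icc 1 (n₁ - 1),
          ((n₁ - i : ℕ) : Polynomial ℤ) * (X ^ (n₁ + n₂ + i) + X ^ (n₁ + n₂ + i - 1))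
      + ∑ i ∈ Icc 0 n₂, ((n₂ + 1 - i : ℕ) : Polynomial ℤ) * X ^ (2 * n₁ + i)
      + (n₁ : Polynomial ℤ) * X ^ (2 * n₁)
      + ∑ i ∈ Icc 0 (n₁ - 1), ((i + 1 : ℕ) : Polynomial ℤ) * X ^ (n₁ + i)
      + ∑ i ∈ Icc 0 (n₁ - 1), ∑ j ∈ Icc 0 i, (X : Polynomial ℤ) ^ (i + j)
      - ∑ i ∈ Icc 0 (n₁ - 1), ∑ j ∈ Icc 0 i, (X : Polynomial ℤ) ^ (2 * n₁ + j)
      - 2 * ∑ i ∈ Icc 1 n₁, (i : Polynomial ℤ) * X ^ (2 * n₁ + n₂ - i)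
      - ∑ i ∈ Icc n₁ (n₂ - 1), ∑ j ∈ Icc 0 i, (X : Polynomial ℤ) ^ (2 * n₁ + j))
    = ∑ i ∈ Icc 1 n₁, (i : Polynomial ℤ) * (X ^ (2 * i - 1) + X ^ (2 * i - 2))
      + ((2 * n₁ + 1 : ℕ) : Polynomial ℤ) * ∑ i ∈ Icc (2 * n₁) (n₁ + n₂ - 1), X ^ i
      + 4 * ∑ i ∈ Icc (n₁ + n₂) (2 * n₁ + n₂ - 1),
          ((2 * n₁ + n₂ - i : ℕ) : Polynomial ℤ) * X ^ i
      + X ^ (2 * n₁ + n₂) := by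
  obtain ⟨a, rfl⟩ : ∃ a, n₁ = a + 1 := ⟨n₁ - 1, by omega⟩
  obtain ⟨b, rfl⟩ : ∃ b, n₂ = a + 1 + b := ⟨n₂ - (a + 1), by omega⟩
  clear h₁ h₁₂
  have c1 : (∑ i ∈ Icc 1 (a + 1), (i : Polynomial ℤ) * X ^ (2 * (a + 1) + (a + 1 + b) - i))
      = ∑ i ∈ range (a + 1), ((a + 1 - i : ℕ) : Polynomial ℤ) * X ^ (2 * a + b + 2 + i) := by
    refine sum_Icc_range_rev _ _ (by omega) ?_
    intro i hi
    rw [show 1 + (a + 1 - 1 - i) = a + 1 - i by omega,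
      show 2 * (a + 1) + (a + 1 + b) - (a + 1 - i) = 2 * a + b + 2 + i by omega]
  have c2 : (∑ i ∈ Icc (2 * (a + 1) + 1) ((a + 1) + (a + 1 + b)),
        ((X : Polynomial ℤ) ^ i + X ^ (i - 1)))
      = (∑ i ∈ range b, (X : Polynomial ℤ) ^ (2 * a + 3 + i))
        + ∑ i ∈ range b, (X : Polynomial ℤ) ^ (2 * a + 2 + i) := by
    rw [← sum_add_distrib]
    refine sum_Icc_range _ _ (by omega) ?_
    intro i hi
    rw [show 2 * (a + 1) + 1 + i = 2 * a + 3 + i by omega,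
      show 2 * a + 3 + i - 1 = 2 * a + 2 + i by omega]
  have c3 : (∑ i ∈ Icc 1 (a + 1 - 1), ((a + 1 - i : ℕ) : Polynomial ℤ)
        * (X ^ ((a + 1) + (a + 1 + b) + i) + X ^ ((a + 1) + (a + 1 + b) + i - 1)))
      = (∑ i ∈ range a, ((a - i : ℕ) : Polynomial ℤ) * X ^ (2 * a + b + 3 + i))
        + ∑ i ∈ range a, ((a - i : ℕ) : Polynomial ℤ) * X ^ (2 * a + b + 2 + i) := by
    rw [← sum_add_distrib]
    refine sum_Icc_range _ _ (by omega) ?_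
    intro i hi
    rw [show a + 1 - (1 + i) = a - i by omega,
      show (a + 1) + (a + 1 + b) + (1 + i) = 2 * a + b + 3 + i by omega,
      show 2 * a + b + 3 + i - 1 = 2 * a + b + 2 + i by omega]
    ring
  have c4 : (∑ i ∈ Icc 0 (a + 1 + b), ((a + 1 + b + 1 - i : ℕ) : Polynomial ℤ)
        * X ^ (2 * (a + 1) + i))
      = ∑ i ∈ range (a + b + 2), ((a + b + 2 - i : ℕ) : Polynomial ℤ) * X ^ (2 * a + 2 + i) := by
    refine sum_Icc_range _ _ (by omega) ?_
    intro i hi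
    rw [show a + 1 + b + 1 - (0 + i) = a + b + 2 - i by omega,
      show 2 * (a + 1) + (0 + i) = 2 * a + 2 + i by omega]
  have c6 : (∑ i ∈ Icc 0 (a + 1 - 1), ((i + 1 : ℕ) : Polynomial ℤ) * X ^ ((a + 1) + i))
      = ∑ i ∈ range (a + 1), ((i + 1 : ℕ) : Polynomial ℤ) * X ^ (a + 1 + i) := by
    refine sum_Icc_range _ _ (by omega) ?_
    intro i hi
    rw [show (0 + i : ℕ) = i by omega]
  have c7 : (∑ i ∈ Icc 0 (a + 1 - 1), ∑ j ∈ Icc 0 i, (X : Polynomial ℤ) ^ (i + j))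
      = ∑ i ∈ range (a + 1), ∑ j ∈ range (i + 1), (X : Polynomial ℤ) ^ (i + j) := by
    refine sum_Icc_range _ _ (by omega) ?_
    intro i hi
    rw [Nat.zero_add i]
    refine sum_Icc_range _ _ (by omega) ?_
    intro j hj
    rw [show i + (0 + j) = i + j by omega]
  have c8 : (∑ i ∈ Icc 0 (a + 1 - 1), ∑ j ∈ Icc 0 i, (X : Polynomial ℤ) ^ (2 * (a + 1) + j))
      = ∑ i ∈ range (a + 1), ∑ j ∈ range (1 + i), (X : Polynomial ℤ) ^ (2 * a + 2 + j) := by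
    refine sum_Icc_range _ _ (by omega) ?_
    intro i hi
    rw [Nat.zero_add i]
    refine sum_Icc_range _ _ (by omega) ?_
    intro j hj
    rw [show 2 * (a + 1) + (0 + j) = 2 * a + 2 + j by omega]
  have c10 : (∑ i ∈ Icc (a + 1) ((a + 1 + b) - 1), ∑ j ∈ Icc 0 i,
        (X : Polynomial ℤ) ^ (2 * (a + 1) + j))
      = ∑ i ∈ range b, ∑ j ∈ range (a + 2 + i), (X : Polynomial ℤ) ^ (2 * a + 2 + j) := by
    refine sum_Icc_range _ _ (by omega) ?_
    intro i hi
    refine sum_Icc_range _ _ (by omega) ?_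
    intro j hj
    rw [show 2 * (a + 1) + (0 + j) = 2 * a + 2 + j by omega]
  have cR1 : (∑ i ∈ Icc 1 (a + 1), (i : Polynomial ℤ) * (X ^ (2 * i - 1) + X ^ (2 * i - 2)))
      = ∑ i ∈ range (a + 1), ((i + 1 : ℕ) : Polynomial ℤ) * (X ^ (2 * i + 1) + X ^ (2 * i)) := by
    refine sum_Icc_range _ _ (by omega) ?_
    intro i hi
    rw [show (1 + i : ℕ) = i + 1 by omega, show 2 * (i + 1) - 1 = 2 * i + 1 by omega,
      show 2 * (i + 1) - 2 = 2 * i by omega]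
  have cR2 : (∑ i ∈ Icc (2 * (a + 1)) ((a + 1) + (a + 1 + b) - 1), (X : Polynomial ℤ) ^ i)
      = ∑ i ∈ range b, (X : Polynomial ℤ) ^ (2 * a + 2 + i) := by
    refine sum_Icc_range _ _ (by omega) ?_
    intro i hi
    rw [show 2 * (a + 1) + i = 2 * a + 2 + i by omega]
  have cR3 : (∑ i ∈ Icc ((a + 1) + (a + 1 + b)) (2 * (a + 1) + (a + 1 + b) - 1),
        ((2 * (a + 1) + (a + 1 + b) - i : ℕ) : Polynomial ℤ) * X ^ i)
      = ∑ i ∈ range (a + 1), ((a + 1 - i : ℕ) : Polynomial ℤ) * X ^ (2 * a + b + 2 + i) := by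
    refine sum_Icc_range _ _ (by omega) ?_
    intro i hi
    rw [show 2 * (a + 1) + (a + 1 + b) - ((a + 1) + (a + 1 + b) + i) = a + 1 - i by omega,
      show (a + 1) + (a + 1 + b) + i = 2 * a + b + 2 + i by omega]
  rw [c1, c2, c3, c4, c6, c7, c8, c10, cR1, cR2, cR3]
  have hM : ((X : Polynomial ℤ) - 1) ^ 2 * (X + 1) ^ 2 ≠ 0 := by
    intro h
    have h0 := congrArg (eval 0) h
    simp at h0
  refine mul_left_cancel₀ hM ?_
  have hD1 := mulD (2 * a + b + 2) (a + 1)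
  have hG1 := mulG (2 * a + 3) b
  have hG2 := mulG (2 * a + 2) b
  have hD2 := mulD (2 * a + b + 3) a
  have hD3 := mulD (2 * a + b + 2) a
  have hD4 := mulD (2 * a + 2) (a + b + 2)
  have hA := mulA (a + 1) (a + 1)
  have hF := mulF (a + 1)
  have hH1 := mulH (2 * a + 2) 1 (a + 1)
  have hH2 := mulH (2 * a + 2) (a + 2) b
  have hE := mulE (a + 1)
  push_cast at hD1 hG1 hG2 hD2 hD3 hD4 hA hF hH1 hH2 hE ⊢
  linear_combination (-2 : Polynomial ℤ) * hD1 + ((a : Polynomial ℤ) + 1) * hG1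
    - ((a : Polynomial ℤ) + 2) * hG2 + hD2 + hD3 + hD4 + hA + hF - hH1 - hH2 - hE
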